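/- Let G be an r-regular graph on n vertices with adjacency eigenvalue λ ≠ r. Then x is a normalized Laplacian eigenvalue of the central graph C(G) whenever (x-1)((x-1) - (1+λ)/(n-1)) - (λ+r)/(2(n-1)) = 0, i.e., each such λ contributes the two roots of this quadratic to the normalized Laplacian spectrum of C(G). -/

import Mathlib

open scoped Classical
open Polynomial Matrix

/-- The normalized Laplacian `L = I - D^{-1/2} A D^{-1/2}` of a finite simple graph. -/
noncomputable def normLap {V : Type*} [Fintype V] (G : SimpleGraph V) : Matrix V V ℝ :=
  1 - Matrix.diagonal (fun v => (Real.sqrt (G.degree v))⁻¹) * G.adjMatrix ℝ *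
      Matrix.diagonal (fun v => (Real.sqrt (G.degree v))⁻¹)

/-- `μ` is an eigenvalue of the matrix `M`. -/
def Matrix.IsEigenvalue {V : Type*} [Fintype V] (M : Matrix V V ℝ) (μ : ℝ) : Prop :=
  ∃ v : V → ℝ, v ≠ 0 ∧ M.mulVec v = μ • v

/-- The central graph `C(G)`: subdivide every edge of `G` once and join all
nonadjacent vertices of `G`. -/
def centralGraph {V : Type*} (G : SimpleGraph V) : SimpleGraph (V ⊕ G.edgeSet) where
  Adj x y :=
    match x, y with
    | Sum.inl v, Sum.inl w => v ≠ w ∧ ¬ G.Adj v w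
    | Sum.inl v, Sum.inr e => v ∈ (e : Sym2 V)
    | Sum.inr e, Sum.inl v => v ∈ (e : Sym2 V)
    | Sum.inr _, Sum.inr _ => False
  symm := by
    constructor
    rintro (v|e) (w|f) h
    · exact ⟨h.1.symm, fun a => h.2 a.symm⟩
    · exact h
    · exact h
    · exact h
  loopless := by
    constructor
    rintro (v|e) h
    · exact h.1 rfl
    · exact h

/-! ### Auxiliary material -/

lemma centralGraph_adj_ll {V : Type*} (G : SimpleGraph V) (u w : V) :
    (centralGraph G).Adj (Sum.inl u) (Sum.inl w) ↔ (u ≠ w ∧ ¬ G.Adj u w) := Iff.rfl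

lemma centralGraph_adj_lr {V : Type*} (G : SimpleGraph V) (u : V) (e : G.edgeSet) :
    (centralGraph G).Adj (Sum.inl u) (Sum.inr e) ↔ u ∈ (e : Sym2 V) := Iff.rfl

lemma centralGraph_adj_rl {V : Type*} (G : SimpleGraph V) (u : V) (e : G.edgeSet) :
    (centralGraph G).Adj (Sum.inr e) (Sum.inl u) ↔ u ∈ (e : Sym2 V) := Iff.rfl

lemma centralGraph_adj_rr {V : Type*} (G : SimpleGraph V) (e f : G.edgeSet) :
    (centralGraph G).Adj (Sum.inr e) (Sum.inr f) ↔ False := Iff.rfl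

noncomputable def sym2Sum {V : Type*} (g : V → ℝ) : Sym2 V → ℝ :=
  Sym2.lift ⟨fun a b => g a + g b, fun _ _ => add_comm _ _⟩

lemma sum_mem_sym2 {V : Type*} [Fintype V] {e : Sym2 V} (he : ¬ e.IsDiag) (g : V → ℝ) :
    ∑ w, (if w ∈ e then g w else 0) = sym2Sum g e := by
  induction e with
  | _ a b =>
    have hab : a ≠ b := by simpa using he
    have hf : (Finset.univ.filter (fun w => w ∈ s(a,b))) = {a, b} := by
      ext w; simp [Sym2.mem_iff]
    rw [← Finset.sum_filter, hf, Finset.sum_pair hab]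
    simp [sym2Sum]

lemma sum_incidence {V : Type*} [Fintype V] (G : SimpleGraph V) (u : V) (F : Sym2 V → ℝ) :
    ∑ e : G.edgeSet, (if u ∈ (e : Sym2 V) then F e else 0)
      = ∑ w ∈ G.neighborFinset u, F s(u, w) := by
  classical
  rw [← Finset.sum_filter]
  refine Finset.sum_bij' (fun e he => Sym2.Mem.other' (Finset.mem_filter.mp he).2)
    (fun w hw => ⟨s(u, w), (SimpleGraph.mem_edgeSet G).mpr
      ((SimpleGraph.mem_neighborFinset G u w).mp hw)⟩)
    ?_ ?_ ?_ ?_ ?_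
  · intro e he
    rw [SimpleGraph.mem_neighborFinset]
    have h2 := (Finset.mem_filter.mp he).2
    have := Sym2.other_spec' h2
    rw [← SimpleGraph.mem_edgeSet, this]
    exact e.2
  · intro w hw
    simp [Sym2.mem_iff]
  · intro e he
    ext1
    exact Sym2.other_spec' (Finset.mem_filter.mp he).2
  · intro w hw
    have := Sym2.other_spec' (a := u) (z := s(u,w)) (by simp)
    exact (Sym2.congr_right.mp this)
  · intro e he
    congr 1
    exact (Sym2.other_spec' (Finset.mem_filter.mp he).2).symm

noncomputable def nbrEquivInl {V : Type*} [Fintype V] (G : SimpleGraph V) (u : V) :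
    (centralGraph G).neighborSet (Sum.inl u) ≃
      ({w : V // u ≠ w ∧ ¬ G.Adj u w} ⊕ {e : G.edgeSet // u ∈ (e : Sym2 V)}) where
  toFun z := match z with
    | ⟨Sum.inl w, h⟩ => Sum.inl ⟨w, h⟩
    | ⟨Sum.inr e, h⟩ => Sum.inr ⟨e, h⟩
  invFun z := match z with
    | Sum.inl ⟨w, h⟩ => ⟨Sum.inl w, h⟩
    | Sum.inr ⟨e, h⟩ => ⟨Sum.inr e, h⟩
  left_inv := by rintro ⟨(w|e), h⟩ <;> rfl
  right_inv := by rintro (⟨w,h⟩|⟨e,h⟩) <;> rfl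

noncomputable def nbrEquivInr {V : Type*} [Fintype V] (G : SimpleGraph V) (e : G.edgeSet) :
    (centralGraph G).neighborSet (Sum.inr e) ≃ {w : V // w ∈ (e : Sym2 V)} where
  toFun z := match z with
    | ⟨Sum.inl w, h⟩ => ⟨w, h⟩
    | ⟨Sum.inr f, h⟩ => absurd h (by simp [centralGraph_adj_rr])
  invFun z := ⟨Sum.inl z.1, z.2⟩
  left_inv := by
    rintro ⟨(w|f), h⟩
    · rfl
    · exact absurd h (by simp [centralGraph_adj_rr])
  right_inv := by rintro ⟨w, h⟩; rfl

lemma degree_inr {V : Type*} [Fintype V] (G : SimpleGraph V) (e : G.edgeSet) :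
    (centralGraph G).degree (Sum.inr e) = 2 := by
  classical
  rw [← SimpleGraph.card_neighborSet_eq_degree]
  rw [Fintype.card_congr (nbrEquivInr G e)]
  obtain ⟨e, he⟩ := e
  induction e with
  | _ a b =>
    have hab : a ≠ b := by
      intro h; exact (G.not_isDiag_of_mem_edgeSet he) (by simp [h])
    rw [Fintype.card_subtype]
    have hf : (Finset.univ.filter (fun w => w ∈ (s(a,b) : Sym2 V))) = {a, b} := by
      ext w; simp [Sym2.mem_iff]
    rw [hf, Finset.card_pair hab]

lemma degree_inl {V : Type*} [Fintype V] (G : SimpleGraph V) {r : ℕ}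
    (hreg : G.IsRegularOfDegree r) (u : V) :
    (centralGraph G).degree (Sum.inl u) = Fintype.card V - 1 := by
  classical
  rw [← SimpleGraph.card_neighborSet_eq_degree]
  rw [Fintype.card_congr (nbrEquivInl G u), Fintype.card_sum]
  have hB : Fintype.card {e : G.edgeSet // u ∈ (e : Sym2 V)} = r := by
    rw [Fintype.card_congr (Equiv.subtypeSubtypeEquivSubtypeInter
      (fun e => e ∈ G.edgeSet) (fun e => u ∈ e))]
    rw [← hreg u, ← SimpleGraph.card_incidenceSet_eq_degree]
    exact Fintype.card_congr (Equiv.setCongr rfl)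
  have hA : Fintype.card {w : V // u ≠ w ∧ ¬ G.Adj u w} = Fintype.card V - (r + 1) := by
    rw [Fintype.card_subtype]
    have hf : (Finset.univ.filter (fun w => u ≠ w ∧ ¬ G.Adj u w))
        = Finset.univ \ insert u (G.neighborFinset u) := by
      ext w
      simp only [Finset.mem_filter, Finset.mem_univ, true_and, Finset.mem_sdiff,
        Finset.mem_insert, SimpleGraph.mem_neighborFinset]
      constructor
      · rintro ⟨h1, h2⟩ (h3 | h4)
        · exact h1 h3.symm
        · exact h2 h4
      · intro h
        push_neg at h
        exact ⟨fun hh => h.1 hh.symm, h.2⟩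
    rw [hf, Finset.card_sdiff_of_subset (Finset.subset_univ _)]
    rw [Finset.card_insert_of_notMem (G.notMem_neighborFinset_self u)]
    rw [Finset.card_univ, ← hreg u, SimpleGraph.degree, add_comm]
  rw [hA, hB]
  have hlt : r < Fintype.card V := by
    have := G.degree_lt_card_verts u
    rwa [hreg u] at this
  omega

lemma exists_kernel {V : Type*} [Fintype V] (G : SimpleGraph V)
    (v : V → ℝ) (hv : v ≠ 0)
    (hyE : ∀ e : G.edgeSet, ∑ u, (if u ∈ (e : Sym2 V) then v u else 0) = 0)
    (hcard : Fintype.card V ≤ Fintype.card G.edgeSet) :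
    ∃ w : G.edgeSet → ℝ, w ≠ 0 ∧
      ∀ u : V, ∑ e : G.edgeSet, (if u ∈ (e : Sym2 V) then w e else 0) = 0 := by
  classical
  obtain ⟨u₀, hu₀⟩ := Function.ne_iff.mp hv
  simp only [Pi.zero_apply] at hu₀
  let Φ : (G.edgeSet → ℝ) →ₗ[ℝ] (V → ℝ) :=
    { toFun := fun w u => ∑ e : G.edgeSet, (if u ∈ (e : Sym2 V) then w e else 0)
      map_add' := by
        intro w₁ w₂; funext u
        rw [Pi.add_apply, ← Finset.sum_add_distrib]
        exact Finset.sum_congr rfl fun e _ => by split <;> simp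
      map_smul' := by
        intro a w; funext u
        simp only [RingHom.id_apply, Pi.smul_apply, smul_eq_mul, Finset.mul_sum]
        exact Finset.sum_congr rfl fun e _ => by split <;> simp }
  let φ : (V → ℝ) →ₗ[ℝ] ℝ :=
    { toFun := fun g => ∑ u, v u * g u
      map_add' := by intro g₁ g₂; simp [mul_add, Finset.sum_add_distrib]
      map_smul' := by intro a g; simp [Finset.mul_sum]; ring_nf; simp [mul_comm, mul_left_comm] }
  have hrange : LinearMap.range Φ ≤ LinearMap.ker φ := by
    rintro g ⟨w, rfl⟩
    simp only [LinearMap.mem_ker]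
    show ∑ u, v u * (∑ e : G.edgeSet, (if u ∈ (e : Sym2 V) then w e else 0)) = 0
    have h1 : ∀ u, v u * (∑ e : G.edgeSet, (if u ∈ (e : Sym2 V) then w e else 0))
        = ∑ e : G.edgeSet, (if u ∈ (e : Sym2 V) then v u * w e else 0) := by
      intro u
      rw [Finset.mul_sum]
      exact Finset.sum_congr rfl fun e _ => by split <;> simp
    rw [Finset.sum_congr rfl fun u _ => h1 u, Finset.sum_comm]
    refine Finset.sum_eq_zero fun e _ => ?_
    have h2 : ∑ u, (if u ∈ (e : Sym2 V) then v u * w e else 0)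
        = (∑ u, (if u ∈ (e : Sym2 V) then v u else 0)) * w e := by
      rw [Finset.sum_mul]
      exact Finset.sum_congr rfl fun u _ => by split <;> simp
    rw [h2, hyE e, zero_mul]
  have hφsurj : Function.Surjective φ := by
    intro t
    refine ⟨(t / v u₀) • (Pi.single u₀ 1 : V → ℝ), ?_⟩
    rw [LinearMap.map_smul]
    have h3 : φ (Pi.single u₀ 1) = v u₀ := by
      show ∑ u, v u * (Pi.single u₀ 1 : V → ℝ) u = v u₀
      simp [Pi.single_apply, mul_ite, Finset.sum_ite_eq']
    rw [h3, smul_eq_mul, div_mul_cancel₀ _ hu₀]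
  have hker : LinearMap.ker Φ ≠ ⊥ := by
    intro hbot
    have h2 := LinearMap.finrank_range_add_finrank_ker Φ
    rw [hbot, finrank_bot, add_zero] at h2
    have h3 : Module.finrank ℝ (LinearMap.range Φ) ≤ Module.finrank ℝ (LinearMap.ker φ) :=
      Submodule.finrank_mono hrange
    have h4 := LinearMap.finrank_range_add_finrank_ker φ
    rw [LinearMap.range_eq_top.mpr hφsurj, finrank_top, Module.finrank_self] at h4
    rw [Module.finrank_pi] at h2 h4
    have hpos : 0 < Fintype.card V := Fintype.card_pos_iff.mpr ⟨u₀⟩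
    omega
  obtain ⟨w, hwker, hw0⟩ := (Submodule.ne_bot_iff _).mp hker
  exact ⟨w, hw0, fun u => congrFun (LinearMap.mem_ker.mp hwker) u⟩

lemma normLap_mulVec {W : Type*} [Fintype W] (H : SimpleGraph W) (y : W → ℝ) (z : W) :
    (normLap H).mulVec y z = y z - (Real.sqrt (H.degree z))⁻¹ *
      ∑ z', (if H.Adj z z' then (Real.sqrt (H.degree z'))⁻¹ * y z' else 0) := by
  rw [normLap, Matrix.sub_mulVec, Matrix.one_mulVec, ← Matrix.mulVec_mulVec,
    ← Matrix.mulVec_mulVec, Pi.sub_apply, Matrix.mulVec_diagonal,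
    SimpleGraph.adjMatrix_mulVec_apply]
  congr 1
  congr 1
  have hnb : H.neighborFinset z = Finset.univ.filter (H.Adj z) := by
    ext z'; simp [SimpleGraph.mem_neighborFinset]
  rw [hnb, Finset.sum_filter]
  exact Finset.sum_congr rfl fun z' _ => by
    split
    · rw [Matrix.mulVec_diagonal]
    · rfl

lemma sum_ite_mul_const {ι : Type*} [Fintype ι] (a : ℝ) (p : ι → Prop) [DecidablePred p]
    (g : ι → ℝ) :
    ∑ i, (if p i then a * g i else 0) = a * ∑ i, (if p i then g i else 0) := by
  rw [Finset.mul_sum]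
  exact Finset.sum_congr rfl fun i _ => by split <;> simp

lemma eigen_criterion {V : Type*} [Fintype V] (G : SimpleGraph V) {r : ℕ}
    (hreg : G.IsRegularOfDegree r) (hn1 : 1 ≤ Fintype.card V) (x : ℝ)
    (y : V ⊕ G.edgeSet → ℝ)
    (h1 : ∀ u : V,
      (Real.sqrt ((Fintype.card V : ℝ) - 1))⁻¹ *
        ((Real.sqrt ((Fintype.card V : ℝ) - 1))⁻¹ *
            (∑ w, if u ≠ w ∧ ¬ G.Adj u w then y (Sum.inl w) else 0)
          + (Real.sqrt 2)⁻¹ *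
            (∑ e : G.edgeSet, if u ∈ (e : Sym2 V) then y (Sum.inr e) else 0))
      = (1 - x) * y (Sum.inl u))
    (h2 : ∀ e : G.edgeSet,
      (Real.sqrt 2)⁻¹ * ((Real.sqrt ((Fintype.card V : ℝ) - 1))⁻¹ *
          (∑ w, if w ∈ (e : Sym2 V) then y (Sum.inl w) else 0))
      = (1 - x) * y (Sum.inr e)) :
    (normLap (centralGraph G)).mulVec y = x • y := by
  classical
  set d : ℝ := Real.sqrt ((Fintype.card V : ℝ) - 1) with hd
  set c : ℝ := Real.sqrt 2 with hc
  have fl : ∀ w : V, (Real.sqrt (((centralGraph G).degree (Sum.inl w) : ℕ) : ℝ))⁻¹ = d⁻¹ := by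
    intro w
    rw [degree_inl G hreg w, hd, Nat.cast_sub hn1, Nat.cast_one]
  have fr : ∀ e : G.edgeSet,
      (Real.sqrt (((centralGraph G).degree (Sum.inr e) : ℕ) : ℝ))⁻¹ = c⁻¹ := by
    intro e
    rw [degree_inr G e, hc]
    norm_num
  funext z
  rw [normLap_mulVec (centralGraph G) y z, Fintype.sum_sum_type]
  cases z with
  | inl u =>
    have e1 : (∑ w : V, if (centralGraph G).Adj (Sum.inl u) (Sum.inl w)
          then (Real.sqrt (((centralGraph G).degree (Sum.inl w) : ℕ) : ℝ))⁻¹ * y (Sum.inl w) else 0)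
        = d⁻¹ * ∑ w, (if u ≠ w ∧ ¬ G.Adj u w then y (Sum.inl w) else 0) := by
      rw [← sum_ite_mul_const]
      exact Finset.sum_congr rfl fun w _ => by
        rw [fl w]
        exact if_congr (centralGraph_adj_ll G u w) rfl rfl
    have e2 : (∑ e : G.edgeSet, if (centralGraph G).Adj (Sum.inl u) (Sum.inr e)
          then (Real.sqrt (((centralGraph G).degree (Sum.inr e) : ℕ) : ℝ))⁻¹ * y (Sum.inr e) else 0)
        = c⁻¹ * ∑ e : G.edgeSet, (if u ∈ (e : Sym2 V) then y (Sum.inr e) else 0) := by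
      rw [← sum_ite_mul_const]
      exact Finset.sum_congr rfl fun e _ => by
        rw [fr e]
        exact if_congr (centralGraph_adj_lr G u e) rfl rfl
    rw [e1, e2, fl u]
    have h := h1 u
    rw [Pi.smul_apply, smul_eq_mul]
    rw [mul_add] at h ⊢
    nlinarith [h]
  | inr e =>
    have e1 : (∑ w : V, if (centralGraph G).Adj (Sum.inr e) (Sum.inl w)
          then (Real.sqrt (((centralGraph G).degree (Sum.inl w) : ℕ) : ℝ))⁻¹ * y (Sum.inl w) else 0)
        = d⁻¹ * ∑ w, (if w ∈ (e : Sym2 V) then y (Sum.inl w) else 0) := by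
      rw [← sum_ite_mul_const]
      exact Finset.sum_congr rfl fun w _ => by
        rw [fl w]
        exact if_congr (centralGraph_adj_rl G w e) rfl rfl
    have e2 : (∑ f' : G.edgeSet, if (centralGraph G).Adj (Sum.inr e) (Sum.inr f')
          then (Real.sqrt (((centralGraph G).degree (Sum.inr f') : ℕ) : ℝ))⁻¹ * y (Sum.inr f') else 0)
        = 0 := by
      refine Finset.sum_eq_zero fun f' _ => ?_
      rw [if_neg]
      exact (centralGraph_adj_rr G e f').mp
    rw [e1, e2, fr e, add_zero]
    have h := h2 e
    rw [Pi.smul_apply, smul_eq_mul]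
    nlinarith [h]

/-- Each adjacency eigenvalue λ ≠ r of an r-regular graph G contributes the two
roots of (x-1)((x-1) - (1+λ)/(n-1)) - (λ+r)/(2(n-1)) = 0 to the normalized
Laplacian spectrum of the central graph C(G). -/
theorem stmt11 {V : Type*} [Fintype V] (G : SimpleGraph V) (r : ℕ)
    (hreg : G.IsRegularOfDegree r) (lam : ℝ)
    (hlam : (G.adjMatrix ℝ).IsEigenvalue lam) (hne : lam ≠ (r : ℝ)) (x : ℝ)
    (hx : (x - 1) * ((x - 1) - (1 + lam) / ((Fintype.card V : ℝ) - 1)) -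
        (lam + r) / (2 * ((Fintype.card V : ℝ) - 1)) = 0) :
    (normLap (centralGraph G)).IsEigenvalue x := by
  classical
  obtain ⟨v, hv0, hAv⟩ := hlam
  obtain ⟨u₀, hu₀⟩ := Function.ne_iff.mp hv0
  simp only [Pi.zero_apply] at hu₀
  -- sums over neighbors
  have hNbr : ∀ u, ∑ w ∈ G.neighborFinset u, v w = lam * v u := by
    intro u
    have := congrFun hAv u
    rw [SimpleGraph.adjMatrix_mulVec_apply, Pi.smul_apply, smul_eq_mul] at this
    exact this
  have hnbf : ∀ u, G.neighborFinset u = Finset.univ.filter (G.Adj u) := by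
    intro u; ext w; simp [SimpleGraph.mem_neighborFinset]
  have hIte : ∀ u, ∑ w, (if G.Adj u w then v w else 0) = lam * v u := by
    intro u
    rw [← Finset.sum_filter, ← hnbf u]
    exact hNbr u
  -- r ≠ 0
  have hr0 : r ≠ 0 := by
    intro hr
    have hemp : G.neighborFinset u₀ = ∅ := by
      apply Finset.card_eq_zero.mp
      have hdeg : G.degree u₀ = 0 := by rw [hreg u₀, hr]
      exact hdeg
    have := hNbr u₀
    rw [hemp, Finset.sum_empty] at this
    have hlam0 : lam = 0 := by
      rcases mul_eq_zero.mp this.symm with h | h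
      · exact h
      · exact absurd h hu₀
    rw [hlam0, hr] at hne
    exact hne (by norm_num)
  -- card V ≥ 2
  have hn2 : 2 ≤ Fintype.card V := by
    have h1 : r < Fintype.card V := by
      have := G.degree_lt_card_verts u₀
      rwa [hreg u₀] at this
    omega
  have hn1 : 1 ≤ Fintype.card V := by omega
  set N : ℝ := (Fintype.card V : ℝ) with hN
  have hNpos : 0 < N - 1 := by
    rw [hN]
    have : (2 : ℝ) ≤ (Fintype.card V : ℝ) := by exact_mod_cast hn2
    linarith
  have hN1 : N - 1 ≠ 0 := ne_of_gt hNpos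
  set d : ℝ := Real.sqrt (N - 1) with hdd
  set c : ℝ := Real.sqrt 2 with hcc
  have hdpos : 0 < d := Real.sqrt_pos.mpr hNpos
  have hcpos : 0 < c := Real.sqrt_pos.mpr (by norm_num)
  have hd0 : d ≠ 0 := ne_of_gt hdpos
  have hc0 : c ≠ 0 := ne_of_gt hcpos
  have hd2 : d * d = N - 1 := Real.mul_self_sqrt (le_of_lt hNpos)
  have hc2 : c * c = 2 := Real.mul_self_sqrt (by norm_num)
  -- sum of v is zero
  have hSum : ∑ u, v u = 0 := by
    have hcol : ∑ u, ∑ w, (if G.Adj u w then v w else 0) = (r : ℝ) * ∑ w, v w := by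
      rw [Finset.sum_comm]
      have hterm : ∀ w, ∑ u, (if G.Adj u w then v w else 0) = (r : ℝ) * v w := by
        intro w
        have hfil : (Finset.univ.filter (fun u => G.Adj u w)) = G.neighborFinset w := by
          ext u; simp [SimpleGraph.mem_neighborFinset, SimpleGraph.adj_comm]
        rw [← Finset.sum_filter, hfil, Finset.sum_const]
        have hdeg : (G.neighborFinset w).card = r := hreg w
        rw [hdeg, nsmul_eq_mul]
      rw [Finset.sum_congr rfl fun w _ => hterm w, ← Finset.mul_sum]
    have hrow : ∑ u, ∑ w, (if G.Adj u w then v w else 0) = lam * ∑ u, v u := by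
      rw [Finset.sum_congr rfl fun u _ => hIte u, ← Finset.mul_sum]
    by_contra hs
    have : lam = (r : ℝ) := by
      have := hrow.symm.trans hcol
      exact mul_right_cancel₀ hs this
    exact hne this
  -- the nonadjacency sum
  have hA : ∀ u, ∑ w, (if u ≠ w ∧ ¬ G.Adj u w then v w else 0) = -(1 + lam) * v u := by
    intro u
    have split3 : ∀ w, (if u ≠ w ∧ ¬ G.Adj u w then v w else 0)
        = v w - (if w = u then v w else 0) - (if G.Adj u w then v w else 0) := by
      intro w
      by_cases h1 : w = u
      · subst h1
        rw [if_neg (by tauto), if_pos rfl, if_neg (G.irrefl)]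
        ring
      · by_cases h2 : G.Adj u w
        · rw [if_neg (by tauto), if_neg h1, if_pos h2]; ring
        · rw [if_pos ⟨fun hh => h1 hh.symm, h2⟩, if_neg h1, if_neg h2]; ring
    rw [Finset.sum_congr rfl fun w _ => split3 w]
    rw [Finset.sum_sub_distrib, Finset.sum_sub_distrib, hSum, hIte u]
    rw [Finset.sum_ite_eq' Finset.univ u v]
    simp only [Finset.mem_univ, if_true]
    ring
  -- the incidence sum
  have hS2 : ∀ u, ∑ e : G.edgeSet, (if u ∈ (e : Sym2 V) then sym2Sum v ↑e else 0)
      = ((r : ℝ) + lam) * v u := by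
    intro u
    rw [sum_incidence G u (sym2Sum v)]
    have : ∀ w, sym2Sum v s(u, w) = v u + v w := fun w => rfl
    rw [Finset.sum_congr rfl fun w _ => this w, Finset.sum_add_distrib, Finset.sum_const]
    have hdeg : (G.neighborFinset u).card = r := hreg u
    rw [hdeg, nsmul_eq_mul, hNbr u]
    ring
  -- nondiag edges
  have hndiag : ∀ e : G.edgeSet, ¬ (e : Sym2 V).IsDiag :=
    fun e => G.not_isDiag_of_mem_edgeSet e.2
  -- main candidate eigenvector
  set y₀ : V ⊕ G.edgeSet → ℝ :=
    Sum.elim (fun u => ((1 - x) * c * d) * v u) (fun e => sym2Sum v ↑e) with hy₀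
  have hcrit : (normLap (centralGraph G)).mulVec y₀ = x • y₀ := by
    apply eigen_criterion G hreg hn1 x y₀
    · intro u
      have s1 : ∑ w, (if u ≠ w ∧ ¬ G.Adj u w then y₀ (Sum.inl w) else 0)
          = ((1 - x) * c * d) * (-(1 + lam) * v u) := by
        simp only [hy₀, Sum.elim_inl]
        rw [sum_ite_mul_const ((1 - x) * c * d) (fun w => u ≠ w ∧ ¬ G.Adj u w) v, hA u]
      have s2 : ∑ e : G.edgeSet, (if u ∈ (e : Sym2 V) then y₀ (Sum.inr e) else 0)
          = ((r : ℝ) + lam) * v u := by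
        simp only [hy₀, Sum.elim_inr]
        exact hS2 u
      rw [s1, s2]
      show d⁻¹ * (d⁻¹ * _ + c⁻¹ * _) = _
      simp only [hy₀, Sum.elim_inl]
      have key : 2 * (N - 1) * ((1 - x) * (1 - x)) + 2 * (1 - x) * (1 + lam)
          - (lam + (r : ℝ)) = 0 := by
        have hx' := hx
        field_simp at hx'
        apply mul_left_cancel₀ hN1
        linear_combination (N - 1) * hx'
      field_simp
      linear_combination (-(v u)) * key
        + (-(1 - x) * (1 + lam) * v u - d * d * (1 - x)^2 * v u) * hc2
        + (-2 * (1 - x)^2 * v u) * hd2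
    · intro e
      have s3 : ∑ w, (if w ∈ (e : Sym2 V) then y₀ (Sum.inl w) else 0)
          = ((1 - x) * c * d) * sym2Sum v ↑e := by
        simp only [hy₀, Sum.elim_inl]
        rw [sum_ite_mul_const ((1 - x) * c * d) (fun w => w ∈ (e : Sym2 V)) v]
        rw [sum_mem_sym2 (hndiag e) v]
      rw [s3]
      show c⁻¹ * (d⁻¹ * _) = (1 - x) * y₀ (Sum.inr e)
      simp only [hy₀, Sum.elim_inr]
      field_simp
  by_cases hy0 : y₀ = 0
  · -- degenerate case : x = 1 and sym2Sum v vanishes on all edges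
    have hx1 : 1 - x = 0 := by
      have h := congrFun hy0 (Sum.inl u₀)
      simp only [hy₀, Sum.elim_inl, Pi.zero_apply] at h
      rcases mul_eq_zero.mp h with h | h
      · rcases mul_eq_zero.mp h with h | h
        · rcases mul_eq_zero.mp h with h | h
          · exact h
          · exact absurd h hc0
        · exact absurd h hd0
      · exact absurd h hu₀
    have hEz : ∀ e : G.edgeSet, sym2Sum v ↑e = 0 := by
      intro e
      have h := congrFun hy0 (Sum.inr e)
      simpa [hy₀] using h
    have hlamr : lam = -(r : ℝ) := by
      have hxx : x = 1 := by linarith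
      rw [hxx] at hx
      simp only [sub_self, zero_mul, zero_sub, neg_eq_zero] at hx
      rcases div_eq_zero_iff.mp hx with h | h
      · linarith
      · exact absurd h (by intro hh; apply hN1; linarith)
    by_cases hr1 : r = 1
    · -- use (v, 0)
      set z₁ : V ⊕ G.edgeSet → ℝ := Sum.elim v (fun _ => 0) with hz₁
      refine ⟨z₁, ?_, ?_⟩
      · intro h
        have := congrFun h (Sum.inl u₀)
        simp only [hz₁, Sum.elim_inl, Pi.zero_apply] at this
        exact hu₀ this
      · apply eigen_criterion G hreg hn1 x
        · intro u
          have s1 : ∑ w, (if u ≠ w ∧ ¬ G.Adj u w then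
              z₁ (Sum.inl w) else 0) = -(1 + lam) * v u := by
            simp only [hz₁, Sum.elim_inl]
            exact hA u
          have s2 : ∑ e : G.edgeSet, (if u ∈ (e : Sym2 V) then
              z₁ (Sum.inr e) else 0) = 0 := by
            refine Finset.sum_eq_zero fun e _ => ?_
            simp [hz₁]
          rw [s1, s2]
          have hz : z₁ (Sum.inl u) = v u := by simp [hz₁]
          rw [hz]
          have h0 : -(1 + lam) = 0 := by
            rw [hlamr, hr1]; norm_num
          rw [h0, hx1]
          ring
        · intro e
          have s3 : ∑ w, (if w ∈ (e : Sym2 V) then z₁ (Sum.inl w) else 0) = 0 := by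
            simp only [hz₁, Sum.elim_inl]
            rw [sum_mem_sym2 (hndiag e) v]
            exact hEz e
          rw [s3]
          have hz : z₁ (Sum.inr e) = 0 := by simp [hz₁]
          rw [hz]
          ring
    · -- r ≥ 2 : kernel of the incidence map
      have hr2 : 2 ≤ r := by omega
      have hcard : Fintype.card V ≤ Fintype.card G.edgeSet := by
        have hhs := G.sum_degrees_eq_twice_card_edges
        have hsum : ∑ u, G.degree u = Fintype.card V * r := by
          rw [Finset.sum_congr rfl fun u _ => hreg u, Finset.sum_const, Finset.card_univ,
            smul_eq_mul]
        rw [hsum] at hhs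
        have hE : G.edgeFinset.card = Fintype.card G.edgeSet := Set.toFinset_card _
        rw [hE] at hhs
        nlinarith [hhs, hr2, Fintype.card_pos_iff.mpr ⟨u₀⟩]
      have hyE : ∀ e : G.edgeSet, ∑ u, (if u ∈ (e : Sym2 V) then v u else 0) = 0 := by
        intro e
        rw [sum_mem_sym2 (hndiag e) v]
        exact hEz e
      obtain ⟨w, hw0, hwker⟩ := exists_kernel G v hv0 hyE hcard
      set z₂ : V ⊕ G.edgeSet → ℝ := Sum.elim (fun _ => 0) w with hz₂
      refine ⟨z₂, ?_, ?_⟩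
      · intro h
        apply hw0
        funext e
        have := congrFun h (Sum.inr e)
        simpa [hz₂] using this
      · apply eigen_criterion G hreg hn1 x
        · intro u
          have s1 : ∑ w', (if u ≠ w' ∧ ¬ G.Adj u w' then z₂ (Sum.inl w') else 0) = 0 := by
            refine Finset.sum_eq_zero fun w' _ => ?_
            simp [hz₂]
          have s2 : ∑ e : G.edgeSet, (if u ∈ (e : Sym2 V) then z₂ (Sum.inr e) else 0) = 0 := by
            simp only [hz₂, Sum.elim_inr]
            exact hwker u
          rw [s1, s2]
          have hz : z₂ (Sum.inl u) = 0 := by simp [hz₂]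
          rw [hz]
          ring
        · intro e
          have s3 : ∑ w', (if w' ∈ (e : Sym2 V) then z₂ (Sum.inl w') else 0) = 0 := by
            refine Finset.sum_eq_zero fun w' _ => ?_
            simp [hz₂]
          rw [s3]
          rw [hx1]
          ring
  · exact ⟨y₀, hy0, hcrit⟩
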